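/- For every nonnegative integer r, every positive integer p, and every real x with |x| < 1, ∑_{n=1}^∞ n^p ( 1/(1-x)^{r+1} - ∑_{j=0}^n C(r+j, j) x^j ) = (1/r!) d^r/dx^r [ x^r/(1-x)² ω_p(x/(1-x)) ] - (1/(1-x)^{r+1}) ω_{p,r+1}(x/(1-x)). -/

import Mathlib

open Finset Real

/-- Stirling numbers of the second kind. -/
def stirling2 : ℕ → ℕ → ℕ
  | 0, 0 => 1
  | 0, _ + 1 => 0
  | _ + 1, 0 => 0
  | p + 1, k + 1 => (k + 1) * stirling2 p (k + 1) + stirling2 p k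

/-- The geometric (Fubini) polynomial. -/
noncomputable def geomPoly (p : ℕ) (x : ℝ) : ℝ :=
  ∑ k ∈ Finset.range (p + 1), (stirling2 p k : ℝ) * k.factorial * x ^ k

/-- The generalized geometric polynomial $\omega_{p,r+1}$. -/
noncomputable def genGeomPoly (p r : ℕ) (x : ℝ) : ℝ :=
  (1 / r.factorial) * ∑ k ∈ Finset.range (p + 1), (stirling2 p k : ℝ) * (k + r).factorial * x ^ k



lemma polyGeo (d : ℕ) {t : ℝ} (ht : |t| < 1) :
    Summable fun j : ℕ => ((j : ℝ) + 1) ^ d * t ^ j := by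
  have h : ∀ j : ℕ, ((j : ℝ) + 1) ^ d * t ^ j
      = ∑ i ∈ range (d + 1), (d.choose i : ℝ) * ((j : ℝ) ^ i * t ^ j) := by
    intro j
    rw [add_pow, Finset.sum_mul]
    refine Finset.sum_congr rfl fun i _ => ?_
    ring
  rw [funext h]
  refine summable_sum fun i _ => ?_
  exact (summable_pow_mul_geometric_of_norm_lt_one (R := ℝ) i (by rwa [Real.norm_eq_abs])).mul_left _

lemma polyBnd (a : ℕ → ℝ) {C : ℝ} {d : ℕ} (h : ∀ j, |a j| ≤ C * ((j : ℝ) + 1) ^ d)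
    {t : ℝ} (ht : |t| < 1) : Summable fun j => a j * t ^ j := by
  refine Summable.of_norm_bounded (g := fun j => C * (((j : ℝ) + 1) ^ d * |t| ^ j))
    ((polyGeo d (by rwa [abs_abs])).mul_left C) fun j => ?_
  show |a j * t ^ j| ≤ C * (((j : ℝ) + 1) ^ d * |t| ^ j)
  rw [abs_mul, abs_pow, ← mul_assoc]
  exact mul_le_mul_of_nonneg_right (h j) (by positivity)

lemma choose_le_bound (s j : ℕ) : ((s + j).choose j : ℝ) ≤ ((s : ℝ) + 1) ^ s * ((j : ℝ) + 1) ^ s := by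
  have h1 : (s + j).choose j ≤ ((s + 1) * (j + 1)) ^ s := by
    calc (s + j).choose j = (s + j).choose s := by rw [Nat.choose_symm_add]
    _ ≤ (s + j).descFactorial s := by
        rw [Nat.descFactorial_eq_factorial_mul_choose]
        exact Nat.le_mul_of_pos_left _ (Nat.factorial_pos s)
    _ ≤ (s + j) ^ s := Nat.descFactorial_le_pow _ _
    _ ≤ ((s + 1) * (j + 1)) ^ s := Nat.pow_le_pow_left (by nlinarith) s
  calc ((s + j).choose j : ℝ) ≤ (((s + 1) * (j + 1) : ℕ) : ℝ) ^ s := by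
        exact_mod_cast Nat.cast_le.mpr (le_trans h1 (le_of_eq rfl))
  _ = ((s : ℝ) + 1) ^ s * ((j : ℝ) + 1) ^ s := by push_cast; rw [mul_pow]

lemma summable_choose_geo (s : ℕ) {x : ℝ} (hx : |x| < 1) :
    Summable fun j : ℕ => ((s + j).choose j : ℝ) * x ^ j := by
  refine polyBnd _ (C := ((s : ℝ) + 1) ^ s) (d := s) (fun j => ?_) hx
  rw [abs_of_nonneg (by positivity)]
  exact choose_le_bound s j

lemma hasSum_choose_geo (s : ℕ) {x : ℝ} (hx : |x| < 1) :
    HasSum (fun j : ℕ => ((s + j).choose j : ℝ) * x ^ j) (1 / (1 - x) ^ (s + 1)) := by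
  have hx1 : (1 : ℝ) - x ≠ 0 := by
    have := abs_lt.mp hx
    intro h; linarith [this.2, sub_eq_zero.mp h]
  induction s with
  | zero =>
    simpa [one_div] using hasSum_geometric_of_abs_lt_one hx
  | succ s ih =>
    set b : ℕ → ℝ := fun j => ((s + 1 + j).choose j : ℝ) * x ^ j with hb
    have hsb : Summable b := summable_choose_geo (s + 1) hx
    set S := ∑' j, b j with hS
    have hSb : HasSum b S := hsb.hasSum
    have h1 : HasSum (fun j => b j * x) (S * x) := hSb.mul_right x
    have h2 : HasSum (fun j => b (j + 1)) (S - 1) := by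
      rw [hasSum_nat_add_iff 1]
      simpa [hb] using hSb
    have key : ∀ j : ℕ, b (j + 1) - b j * x = ((s + (j + 1)).choose (j + 1) : ℝ) * x ^ (j + 1) := by
      intro j
      have hp : (s + 1 + j + 1).choose (j + 1) = (s + 1 + j).choose j + (s + 1 + j).choose (j + 1) :=
        Nat.choose_succ_succ' (s + 1 + j) j
      simp only [hb]
      rw [show s + (j + 1) = s + 1 + j by omega, show s + 1 + (j + 1) = s + 1 + j + 1 by omega, hp]
      push_cast
      ring
    have h3 : HasSum (fun j => ((s + (j + 1)).choose (j + 1) : ℝ) * x ^ (j + 1)) (S - 1 - S * x) := by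
      have := h2.sub h1
      simpa [key] using this
    have h4 := (hasSum_nat_add_iff (f := fun j : ℕ => ((s + j).choose j : ℝ) * x ^ j) 1).mp h3
    simp only [Finset.range_one, Finset.sum_singleton, Nat.add_zero, Nat.choose_zero_right,
      Nat.cast_one, pow_zero, mul_one] at h4
    have hval : (1 : ℝ) / (1 - x) ^ (s + 1) = S - 1 - S * x + 1 := HasSum.unique ih h4
    have hS1 : S * (1 - x) = 1 / (1 - x) ^ (s + 1) := by rw [hval]; ring
    have hSval : S = 1 / (1 - x) ^ (s + 1 + 1) := by
      rw [pow_succ]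
      field_simp at hS1 ⊢
      linear_combination hS1
    exact hSval ▸ hSb



lemma stirling2_eq_zero : ∀ p k : ℕ, p < k → stirling2 p k = 0 := by
  intro p
  induction p with
  | zero => intro k hk; match k, hk with | k + 1, _ => rfl
  | succ p ih =>
    intro k hk
    match k, hk with
    | k + 1, hk =>
      show (k + 1) * stirling2 p (k + 1) + stirling2 p k = 0
      rw [ih (k + 1) (by omega), ih k (by omega)]
      simp

lemma mul_choose_eq (m k : ℕ) : m * m.choose k = k * m.choose k + (k + 1) * m.choose (k + 1) := by
  rcases le_or_gt k m with h | h
  · have h1 := Nat.choose_succ_right_eq m k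
    have h2 : (k + 1) * m.choose (k + 1) = m.choose k * (m - k) := by rw [← h1]; ring
    have e : k + (m - k) = m := by omega
    rw [h2, mul_comm k, mul_comm m, ← Nat.mul_add, e]
  · rw [Nat.choose_eq_zero_of_lt h, Nat.choose_eq_zero_of_lt (by omega)]
    simp

lemma pow_eq_sum_stirling (p m : ℕ) :
    m ^ p = ∑ k ∈ range (p + 1), stirling2 p k * (k.factorial * m.choose k) := by
  induction p with
  | zero => simp [stirling2]
  | succ p ih =>
    have step1 : m ^ (p + 1)
        = ∑ k ∈ range (p + 1), stirling2 p k * (k.factorial * (m * m.choose k)) := by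
      rw [pow_succ, ih, Finset.sum_mul]
      exact Finset.sum_congr rfl fun k _ => by ring
    have step2 : m ^ (p + 1)
        = (∑ k ∈ range (p + 1), k * stirling2 p k * (k.factorial * m.choose k))
          + ∑ k ∈ range (p + 1), stirling2 p k * ((k + 1).factorial * m.choose (k + 1)) := by
      rw [step1, ← Finset.sum_add_distrib]
      refine Finset.sum_congr rfl fun k _ => ?_
      rw [mul_choose_eq m k, Nat.factorial_succ]
      ring
    rw [step2, Finset.sum_range_succ' (fun k => stirling2 (p + 1) k * (k.factorial * m.choose k)) (p + 1)]
    have hz : stirling2 (p + 1) 0 * (Nat.factorial 0 * m.choose 0) = 0 := by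
      show (stirling2 (p+1) 0) * _ = 0
      rw [show stirling2 (p + 1) 0 = 0 from rfl]
      simp
    rw [hz, add_zero]
    have hrec : ∀ k, stirling2 (p + 1) (k + 1) = (k + 1) * stirling2 p (k + 1) + stirling2 p k :=
      fun k => rfl
    have expand : ∑ k ∈ range (p + 1), stirling2 (p + 1) (k + 1) * ((k + 1).factorial * m.choose (k + 1))
        = (∑ k ∈ range (p + 1), (k + 1) * stirling2 p (k + 1) * ((k + 1).factorial * m.choose (k + 1)))
          + ∑ k ∈ range (p + 1), stirling2 p k * ((k + 1).factorial * m.choose (k + 1)) := by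
      rw [← Finset.sum_add_distrib]
      refine Finset.sum_congr rfl fun k _ => ?_
      rw [hrec k]
      ring
    rw [expand]
    congr 1
    rw [Finset.sum_range_succ' (fun k => k * stirling2 p k * (k.factorial * m.choose k)) p]
    rw [Finset.sum_range_succ (fun k => (k + 1) * stirling2 p (k + 1) * ((k + 1).factorial * m.choose (k + 1))) p]
    rw [stirling2_eq_zero p (p + 1) (by omega)]
    simp

lemma sum_range_choose_hockey (j k : ℕ) : ∑ m ∈ range j, m.choose k = j.choose (k + 1) := by
  cases j with
  | zero => simp
  | succ n =>
    rw [← Nat.sum_Icc_choose n k]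
    refine (Finset.sum_subset (fun m hm => ?_) (fun m hm hm2 => ?_)).symm
    · simp only [Finset.mem_Icc] at hm
      simp only [Finset.mem_range]
      omega
    · simp only [Finset.mem_Icc] at hm2
      simp only [Finset.mem_range] at hm
      exact Nat.choose_eq_zero_of_lt (by omega)

lemma sum_pow_eq (p j : ℕ) (hp : 0 < p) :
    ∑ n ∈ range (j - 1), (n + 1) ^ p
      = ∑ k ∈ range (p + 1), stirling2 p k * (k.factorial * j.choose (k + 1)) := by
  have h1 : ∑ n ∈ range (j - 1), (n + 1) ^ p = ∑ m ∈ range j, m ^ p := by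
    cases j with
    | zero => simp
    | succ n =>
      rw [Nat.succ_sub_one, Finset.sum_range_succ' (fun m => m ^ p) n, Nat.zero_pow hp, add_zero]
  rw [h1]
  calc ∑ m ∈ range j, m ^ p
      = ∑ m ∈ range j, ∑ k ∈ range (p + 1), stirling2 p k * (k.factorial * m.choose k) := by
        exact Finset.sum_congr rfl fun m _ => pow_eq_sum_stirling p m
    _ = ∑ k ∈ range (p + 1), ∑ m ∈ range j, stirling2 p k * (k.factorial * m.choose k) :=
        Finset.sum_comm
    _ = ∑ k ∈ range (p + 1), stirling2 p k * (k.factorial * j.choose (k + 1)) := by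
        refine Finset.sum_congr rfl fun k _ => ?_
        rw [← sum_range_choose_hockey j k]
        simp only [Finset.mul_sum]

-- trinomial revision, real version
lemma trinomial_rev (r k j : ℕ) (h : k ≤ j) :
    ((k + r).choose k : ℝ) * ((r + j).choose (j - k) : ℝ)
      = ((r + j).choose j : ℝ) * ((j).choose k : ℝ) := by
  rw [Nat.cast_choose ℝ (le_add_right le_rfl : k ≤ k + r),
      Nat.cast_choose ℝ (by omega : j - k ≤ r + j),
      Nat.cast_choose ℝ (le_add_left le_rfl : j ≤ r + j),
      Nat.cast_choose ℝ h]
  have e1 : k + r - k = r := by omega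
  have e2 : r + j - (j - k) = r + k := by omega
  have e3 : r + j - j = r := by omega
  rw [e1, e2, e3]
  have h1 : (Nat.factorial k : ℝ) ≠ 0 := Nat.cast_ne_zero.mpr (Nat.factorial_ne_zero k)
  have h2 : (Nat.factorial r : ℝ) ≠ 0 := Nat.cast_ne_zero.mpr (Nat.factorial_ne_zero r)
  have h3 : (Nat.factorial (j - k) : ℝ) ≠ 0 := Nat.cast_ne_zero.mpr (Nat.factorial_ne_zero _)
  have h4 : (Nat.factorial (r + k) : ℝ) ≠ 0 := Nat.cast_ne_zero.mpr (Nat.factorial_ne_zero _)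
  have h5 : (Nat.factorial j : ℝ) ≠ 0 := Nat.cast_ne_zero.mpr (Nat.factorial_ne_zero _)
  have hkr : ((k + r).factorial : ℝ) = (r + k).factorial := by rw [add_comm]
  rw [hkr]
  have h6 : ((r + k).factorial : ℝ) ≠ 0 := h4
  field_simp

-- identity D'
lemma chooseD (r k j : ℕ) :
    ((r + j).choose j : ℝ) * ((j).choose (k + 1) : ℝ)
      + ((k + r).choose k : ℝ) * (if k ≤ j then ((r + j).choose (j - k) : ℝ) else 0)
      = ((j + r).choose r : ℝ) * ((j + 1).choose (k + 1) : ℝ) := by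
  have hsym : (j + r).choose r = (r + j).choose j := by
    rw [add_comm j r, Nat.choose_symm_add]
  rw [hsym]
  rcases le_or_gt k j with h | h
  · rw [if_pos h, trinomial_rev r k j h, Nat.choose_succ_succ' j k]
    push_cast
    ring
  · rw [if_neg (by omega), Nat.choose_eq_zero_of_lt (by omega : j < k + 1),
      Nat.choose_eq_zero_of_lt (by omega : j + 1 < k + 1)]
    simp

section
-- deps from p1 (will be merged)
lemma polyGeo' (d : ℕ) {t : ℝ} (ht : |t| < 1) :
    Summable fun j : ℕ => ((j : ℝ) + 1) ^ d * t ^ j := by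
  have h : ∀ j : ℕ, ((j : ℝ) + 1) ^ d * t ^ j
      = ∑ i ∈ range (d + 1), (d.choose i : ℝ) * ((j : ℝ) ^ i * t ^ j) := by
    intro j; rw [add_pow, Finset.sum_mul]; exact Finset.sum_congr rfl fun i _ => by ring
  rw [funext h]
  exact summable_sum fun i _ =>
    (summable_pow_mul_geometric_of_norm_lt_one (R := ℝ) i (by rwa [Real.norm_eq_abs])).mul_left _

lemma polyBnd' (a : ℕ → ℝ) {C : ℝ} {d : ℕ} (h : ∀ j, |a j| ≤ C * ((j : ℝ) + 1) ^ d)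
    {t : ℝ} (ht : |t| < 1) : Summable fun j => a j * t ^ j := by
  refine Summable.of_norm_bounded (g := fun j => C * (((j : ℝ) + 1) ^ d * |t| ^ j))
    ((polyGeo' d (by rwa [abs_abs])).mul_left C) fun j => ?_
  show |a j * t ^ j| ≤ C * (((j : ℝ) + 1) ^ d * |t| ^ j)
  rw [abs_mul, abs_pow, ← mul_assoc]
  exact mul_le_mul_of_nonneg_right (h j) (by positivity)
end

lemma shift_bound (a : ℕ → ℝ) {C : ℝ} {d : ℕ} (hb : ∀ j, |a j| ≤ C * ((j : ℝ) + 1) ^ d) (hC : 0 ≤ C) :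
    ∀ j : ℕ, |((j : ℝ) + 1) * a (j + 1)| ≤ (C * 2 ^ d) * ((j : ℝ) + 1) ^ (d + 1) := by
  intro j
  have h1 : |a (j + 1)| ≤ C * ((j : ℝ) + 2) ^ d := by
    have := hb (j + 1); push_cast at this
    have e : (j : ℝ) + 1 + 1 = (j : ℝ) + 2 := by ring
    rwa [e] at this
  have h2 : ((j : ℝ) + 2) ^ d ≤ (2 * ((j : ℝ) + 1)) ^ d :=
    pow_le_pow_left₀ (by positivity) (by linarith) d
  calc |((j : ℝ) + 1) * a (j + 1)| = ((j : ℝ) + 1) * |a (j + 1)| := by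
        rw [abs_mul, abs_of_nonneg (by positivity)]
    _ ≤ ((j : ℝ) + 1) * (C * (2 * ((j : ℝ) + 1)) ^ d) := by
        refine mul_le_mul_of_nonneg_left (le_trans h1 ?_) (by positivity)
        exact mul_le_mul_of_nonneg_left h2 hC
    _ = (C * 2 ^ d) * ((j : ℝ) + 1) ^ (d + 1) := by rw [mul_pow]; ring

lemma hasDerivAt_psum (a : ℕ → ℝ) (C : ℝ) (d : ℕ) (hb : ∀ j, |a j| ≤ C * ((j : ℝ) + 1) ^ d)
    {x : ℝ} (hx : |x| < 1) :
    HasDerivAt (fun y : ℝ => ∑' j, a j * y ^ j)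
      (∑' j : ℕ, (((j : ℝ) + 1) * a (j + 1)) * x ^ j) x := by
  have hC : 0 ≤ C := le_trans (abs_nonneg (a 0)) (by simpa using hb 0)
  set s : ℝ := (1 + |x|) / 2 with hs
  have hx0 : 0 ≤ |x| := abs_nonneg x
  have hs0 : 0 < s := by rw [hs]; linarith
  have hxs : |x| < s := by rw [hs]; linarith
  have hs1 : s < 1 := by rw [hs]; linarith
  have hsabs : |s| < 1 := by rw [abs_of_pos hs0]; exact hs1
  set u : ℕ → ℝ := fun n => |a n| * ((n : ℝ) * s ^ (n - 1)) with hu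
  have husum : Summable u := by
    rw [← summable_nat_add_iff 1]
    refine Summable.of_nonneg_of_le (fun n => by positivity)
      (fun n => ?_) ((polyGeo' (d + 1) hsabs).mul_left (C * 2 ^ d))
    show |a (n + 1)| * ((((n : ℕ) + 1 : ℕ) : ℝ) * s ^ (n + 1 - 1)) ≤ _
    have h1 := shift_bound a hb hC n
    have h2 : |((n : ℝ) + 1) * a (n + 1)| = |a (n + 1)| * ((n : ℝ) + 1) := by
      rw [abs_mul, abs_of_nonneg (by positivity), mul_comm]
    rw [h2] at h1
    push_cast [Nat.add_sub_cancel]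
    calc |a (n + 1)| * (((n : ℝ) + 1) * s ^ n) = (|a (n + 1)| * ((n : ℝ) + 1)) * s ^ n := by ring
    _ ≤ ((C * 2 ^ d) * ((n : ℝ) + 1) ^ (d + 1)) * s ^ n := by
        exact mul_le_mul_of_nonneg_right h1 (by positivity)
    _ = C * 2 ^ d * (((n : ℝ) + 1) ^ (d + 1) * s ^ n) := by ring
  have hbound : ∀ (n : ℕ) (y : ℝ), y ∈ Metric.ball (0 : ℝ) s →
      ‖a n * ((n : ℝ) * y ^ (n - 1))‖ ≤ u n := by
    intro n y hy
    have hy' : |y| ≤ s := le_of_lt (by simpa [Real.norm_eq_abs] using mem_ball_zero_iff.mp hy)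
    rw [Real.norm_eq_abs, abs_mul, abs_mul, abs_pow, Nat.abs_cast]
    refine mul_le_mul_of_nonneg_left ?_ (abs_nonneg _)
    exact mul_le_mul_of_nonneg_left (pow_le_pow_left₀ (abs_nonneg y) hy' _) (Nat.cast_nonneg n)
  have hx_mem : x ∈ Metric.ball (0 : ℝ) s := mem_ball_zero_iff.mpr (by rwa [Real.norm_eq_abs])
  have hsum0 : Summable (fun n : ℕ => a n * x ^ n) := polyBnd' a hb hx
  have hmain := hasDerivAt_tsum_of_isPreconnected husum Metric.isOpen_ball
    (convex_ball (0 : ℝ) s).isPreconnected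
    (g := fun n (z : ℝ) => a n * z ^ n)
    (g' := fun n (y : ℝ) => a n * ((n : ℝ) * y ^ (n - 1)))
    (fun n y _ => (hasDerivAt_pow n y).const_mul (a n))
    hbound hx_mem hsum0 hx_mem
  set T := ∑' j : ℕ, (((j : ℝ) + 1) * a (j + 1)) * x ^ j with hT
  have hTsum : HasSum (fun j : ℕ => (((j : ℝ) + 1) * a (j + 1)) * x ^ j) T :=
    (polyBnd' _ (shift_bound a hb hC) hx).hasSum
  have h1 : (fun j : ℕ => (((j : ℝ) + 1) * a (j + 1)) * x ^ j)
      = fun n : ℕ => a (n + 1) * ((((n : ℕ) + 1 : ℕ) : ℝ) * x ^ (n + 1 - 1)) := by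
    funext n; push_cast [Nat.add_sub_cancel]; ring
  rw [h1] at hTsum
  have h2 := (hasSum_nat_add_iff
    (f := fun n : ℕ => a n * ((n : ℝ) * x ^ (n - 1))) 1).mp hTsum
  simp only [Finset.range_one, Finset.sum_singleton, Nat.cast_zero, zero_mul, mul_zero,
    add_zero] at h2
  rwa [h2.tsum_eq] at hmain

lemma iteratedDeriv_psum : ∀ (i : ℕ) (a : ℕ → ℝ) (C : ℝ) (d : ℕ),
    (∀ j, |a j| ≤ C * ((j : ℝ) + 1) ^ d) → ∀ {x : ℝ}, |x| < 1 →
    iteratedDeriv i (fun y : ℝ => ∑' j, a j * y ^ j) x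
      = ∑' j, (((j + i).descFactorial i : ℝ) * a (j + i)) * x ^ j := by
  intro i
  induction i with
  | zero => intro a C d hb x hx; simp
  | succ i ih =>
    intro a C d hb x hx
    have hC : 0 ≤ C := le_trans (abs_nonneg (a 0)) (by simpa using hb 0)
    rw [iteratedDeriv_succ']
    have heq : deriv (fun z : ℝ => ∑' j, a j * z ^ j)
        =ᶠ[nhds x] fun y : ℝ => ∑' j : ℕ, ((((j : ℝ) + 1) * a (j + 1)) * y ^ j) := by
      refine Filter.eventuallyEq_of_mem (Metric.isOpen_ball.mem_nhds
        (mem_ball_zero_iff.mpr (by rwa [Real.norm_eq_abs]))) (fun y hy => ?_)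
      have hy1 : |y| < 1 := by simpa [Real.norm_eq_abs] using mem_ball_zero_iff.mp hy
      exact (hasDerivAt_psum a C d hb hy1).deriv
    rw [heq.iteratedDeriv_eq i,
      ih (fun j => ((j : ℝ) + 1) * a (j + 1)) (C * 2 ^ d) (d + 1) (shift_bound a hb hC) hx]
    refine tsum_congr fun j => ?_
    have hdf : (j + (i + 1)).descFactorial (i + 1) = (j + i + 1) * ((j + i).descFactorial i) := by
      rw [show j + (i + 1) = (j + i) + 1 by ring]
      exact Nat.succ_descFactorial_succ (j + i) i
    rw [hdf]
    push_cast
    ring_nf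
theorem stmt_19 (r : ℕ) (p : ℕ) (hp : 0 < p) (x : ℝ) (hx : |x| < 1) :
    ∑' n : ℕ, ((n : ℝ) + 1) ^ p *
        (1 / (1 - x) ^ (r + 1) - ∑ j ∈ Finset.range (n + 2), ((r + j).choose j : ℝ) * x ^ j)
      = (1 / r.factorial) *
          iteratedDeriv r (fun y => y ^ r / (1 - y) ^ 2 * geomPoly p (y / (1 - y))) x
        - (1 / (1 - x) ^ (r + 1)) * genGeomPoly p r (x / (1 - x)) := by
  have hx1 : (1 : ℝ) - x ≠ 0 := by
    have h := abs_lt.mp hx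
    intro h0
    have : x = 1 := by linarith [sub_eq_zero.mp h0]
    linarith [h.2]
  set a : ℕ → ℝ := fun j => ((r + j).choose j : ℝ) * x ^ j with ha
  set c : ℕ → ℝ := fun k => (stirling2 p k : ℝ) * (k.factorial : ℝ) with hc
  have hc0 : ∀ k, 0 ≤ c k := fun k => by positivity
  set A : ℝ := 1 / (1 - x) ^ (r + 1) with hA
  have hAsum : HasSum a A := hasSum_choose_geo r hx
  -- tails
  have htail : ∀ n : ℕ, HasSum (fun i => a (i + (n + 2))) (A - ∑ j ∈ Finset.range (n + 2), a j) := by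
    intro n
    rw [hasSum_nat_add_iff (n + 2)]
    simpa using hAsum
  -- the double-sum index machinery
  set G : ℕ × ℕ → ℝ := fun q => (if q.2 + 2 ≤ q.1 then ((q.2 : ℝ) + 1) ^ p else 0) * a q.1 with hG
  set ψ : ℕ × ℕ → ℕ × ℕ := fun q => (q.2 + (q.1 + 2), q.1) with hψdef
  have hψinj : Function.Injective ψ := by
    intro q q' h
    rw [hψdef] at h
    simp only [Prod.mk.injEq] at h
    obtain ⟨h1, h2⟩ := h
    exact Prod.ext (by omega) (by omega)
  have hψrange : ∀ q : ℕ × ℕ, q ∉ Set.range ψ → G q = 0 := by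
    intro q hq
    rcases le_or_gt (q.2 + 2) q.1 with h | h
    · exfalso
      exact hq ⟨(q.2, q.1 - (q.2 + 2)), by
        rw [hψdef]
        exact Prod.ext (by simp; omega) (by simp)⟩
    · rw [hG]
      simp only
      rw [if_neg (by omega), zero_mul]
  have haabs : ∀ j, |a j| ≤ ((r : ℝ) + 1) ^ r * ((j : ℝ) + 1) ^ r * |x| ^ j := by
    intro j
    rw [ha]
    simp only
    rw [abs_mul, abs_pow, abs_of_nonneg (by positivity : (0:ℝ) ≤ ((r + j).choose j : ℝ))]
    exact mul_le_mul_of_nonneg_right (choose_le_bound r j) (by positivity)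
  have hGslice0 : ∀ j n, n ∉ Finset.range j → G (j, n) = 0 := by
    intro j n hn
    rw [Finset.mem_range] at hn
    rw [hG]
    simp only
    rw [if_neg (by omega), zero_mul]
  have hGabs : Summable (fun q => |G q|) := by
    rw [summable_prod_of_nonneg (fun q => abs_nonneg _)]
    constructor
    · intro j
      refine summable_of_ne_finset_zero (s := Finset.range j) fun n hn => ?_
      rw [hGslice0 j n hn, abs_zero]
    · refine Summable.of_nonneg_of_le (fun j => tsum_nonneg fun n => abs_nonneg _) (fun j => ?_)
        ((polyGeo (p + r + 1) (by rwa [abs_abs])).mul_left (((r : ℝ) + 1) ^ r))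
      rw [tsum_eq_sum (s := Finset.range j) (fun n hn => by rw [hGslice0 j n hn, abs_zero])]
      have hstep : ∀ n ∈ Finset.range j, |G (j, n)| ≤ ((j : ℝ) + 1) ^ p * |a j| := by
        intro n hn
        rw [Finset.mem_range] at hn
        rw [hG]
        simp only
        rw [abs_mul]
        refine mul_le_mul_of_nonneg_right ?_ (abs_nonneg _)
        split_ifs with h
        · rw [abs_of_nonneg (by positivity)]
          refine pow_le_pow_left₀ (by positivity) ?_ p
          have : (n : ℝ) ≤ (j : ℝ) := Nat.cast_le.mpr (le_of_lt hn)
          linarith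
        · rw [abs_zero]; positivity
      calc ∑ n ∈ Finset.range j, |G (j, n)| ≤ ∑ _n ∈ Finset.range j, ((j : ℝ) + 1) ^ p * |a j| :=
            Finset.sum_le_sum hstep
        _ = (j : ℝ) * (((j : ℝ) + 1) ^ p * |a j|) := by
            rw [Finset.sum_const, Finset.card_range, nsmul_eq_mul]
        _ ≤ ((j : ℝ) + 1) * (((j : ℝ) + 1) ^ p * (((r : ℝ) + 1) ^ r * ((j : ℝ) + 1) ^ r * |x| ^ j)) := by
            have h2 := haabs j
            have h3 : (0:ℝ) ≤ ((j : ℝ) + 1) ^ p := by positivity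
            refine mul_le_mul (by linarith [Nat.cast_nonneg (α := ℝ) j]) ?_ (by positivity)
              (by positivity)
            exact mul_le_mul_of_nonneg_left h2 h3
        _ = ((r : ℝ) + 1) ^ r * (((j : ℝ) + 1) ^ (p + r + 1) * |x| ^ j) := by
            rw [pow_add, pow_add, pow_one]; ring
  have hGsum : Summable G := summable_abs_iff.mp hGabs
  have hFsum : Summable (fun q : ℕ × ℕ => G (ψ q)) := hGsum.comp_injective hψinj
  have hGψ : ∀ n i : ℕ, G (ψ (n, i)) = ((n : ℝ) + 1) ^ p * a (i + (n + 2)) := by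
    intro n i
    rw [hψdef, hG]
    simp only
    rw [if_pos (by omega)]
  have hFslice : ∀ n : ℕ, Summable (fun i => G (ψ (n, i))) := by
    intro n
    have := ((htail n).summable).mul_left (((n : ℝ) + 1) ^ p)
    refine this.congr fun i => ?_
    rw [hGψ]
  -- LHS chain
  have hLHS : (∑' n : ℕ, ((n : ℝ) + 1) ^ p *
      (1 / (1 - x) ^ (r + 1) - ∑ j ∈ Finset.range (n + 2), ((r + j).choose j : ℝ) * x ^ j))
      = ∑' j : ℕ, (∑ k ∈ Finset.range (p + 1), c k * (j.choose (k + 1) : ℝ)) * a j := by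
    have step1 : ∀ n : ℕ, ((n : ℝ) + 1) ^ p *
        (1 / (1 - x) ^ (r + 1) - ∑ j ∈ Finset.range (n + 2), ((r + j).choose j : ℝ) * x ^ j)
        = ∑' i : ℕ, G (ψ (n, i)) := by
      intro n
      have h1 : (1 / (1 - x) ^ (r + 1) - ∑ j ∈ Finset.range (n + 2), ((r + j).choose j : ℝ) * x ^ j)
          = ∑' i : ℕ, a (i + (n + 2)) := by
        exact ((htail n).tsum_eq).symm
      rw [h1, ← tsum_mul_left]
      exact tsum_congr fun i => (hGψ n i).symm
    calc ∑' n : ℕ, ((n : ℝ) + 1) ^ p *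
        (1 / (1 - x) ^ (r + 1) - ∑ j ∈ Finset.range (n + 2), ((r + j).choose j : ℝ) * x ^ j)
        = ∑' n : ℕ, ∑' i : ℕ, G (ψ (n, i)) := tsum_congr step1
      _ = ∑' q : ℕ × ℕ, G (ψ q) := (Summable.tsum_prod' hFsum hFslice).symm
      _ = ∑' q : ℕ × ℕ, G q := hψinj.tsum_eq (Function.support_subset_iff'.mpr hψrange)
      _ = ∑' j : ℕ, ∑' n : ℕ, G (j, n) := Summable.tsum_prod' hGsum
            (fun j => summable_of_ne_finset_zero (s := Finset.range j) fun n hn => hGslice0 j n hn)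
      _ = ∑' j : ℕ, (∑ k ∈ Finset.range (p + 1), c k * (j.choose (k + 1) : ℝ)) * a j := by
          refine tsum_congr fun j => ?_
          rw [tsum_eq_sum (s := Finset.range j) (fun n hn => hGslice0 j n hn)]
          rw [show (fun n => G (j, n)) = fun n : ℕ =>
            (if n + 2 ≤ j then ((n : ℝ) + 1) ^ p else 0) * a j from rfl]
          rw [← Finset.sum_mul]
          congr 1
          rw [← Finset.sum_filter]
          have hfilter : (Finset.range j).filter (fun n => n + 2 ≤ j) = Finset.range (j - 1) := by
            ext n
            simp only [Finset.mem_filter, Finset.mem_range]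
            omega
          rw [hfilter]
          have hnat := sum_pow_eq p j hp
          calc ∑ n ∈ Finset.range (j - 1), ((n : ℝ) + 1) ^ p
              = ((∑ n ∈ Finset.range (j - 1), (n + 1) ^ p : ℕ) : ℝ) := by push_cast; rfl
            _ = ((∑ k ∈ Finset.range (p + 1),
                  stirling2 p k * (k.factorial * j.choose (k + 1)) : ℕ) : ℝ) := by rw [hnat]
            _ = ∑ k ∈ Finset.range (p + 1), c k * (j.choose (k + 1) : ℝ) := by
                push_cast
                exact Finset.sum_congr rfl fun k _ => by rw [hc]; ring
  rw [hLHS]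
  -- the subtracted RHS term as a power series
  set ek : ℕ → ℕ → ℝ := fun k j => if k ≤ j then ((r + j).choose (j - k) : ℝ) else 0 with hek
  have hek_sum : ∀ k : ℕ, HasSum (fun j : ℕ => ek k j * x ^ j)
      (x ^ k * (1 / (1 - x) ^ (k + r + 1))) := by
    intro k
    have h1 := (hasSum_choose_geo (k + r) hx).mul_left (x ^ k)
    have hinj : Function.Injective (fun i : ℕ => i + k) := add_left_injective k
    have hsupp : ∀ j : ℕ, j ∉ Set.range (fun i : ℕ => i + k) → ek k j * x ^ j = 0 := by
      intro j hj
      have hjk : j < k := by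
        by_contra hcon
        exact hj ⟨j - k, by show j - k + k = j; omega⟩
      rw [hek]; simp only
      rw [if_neg (by omega), zero_mul]
    refine (hinj.hasSum_iff hsupp).mp ?_
    show HasSum (fun i : ℕ => ek k (i + k) * x ^ (i + k)) _
    have hfun : (fun i : ℕ => ek k (i + k) * x ^ (i + k))
        = fun i : ℕ => x ^ k * (((k + r + i).choose i : ℝ) * x ^ i) := by
      funext i
      rw [hek]; simp only
      rw [if_pos (by omega)]
      have hch : (r + (i + k)).choose (i + k - k) = (k + r + i).choose i := by
        rw [Nat.add_sub_cancel]
        congr 1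
        omega
      rw [hch, pow_add]
      ring
    rw [hfun]
    exact h1
  set E : ℕ → ℝ := fun j => ∑ k ∈ Finset.range (p + 1), c k * ((k + r).choose k : ℝ) * ek k j
    with hE
  set R2 : ℝ := ∑ k ∈ Finset.range (p + 1),
    c k * ((k + r).choose k : ℝ) * (x ^ k * (1 / (1 - x) ^ (k + r + 1))) with hR2
  have hEsum : HasSum (fun j : ℕ => E j * x ^ j) R2 := by
    have h := hasSum_sum (s := Finset.range (p + 1))
      (f := fun k j => (c k * ((k + r).choose k : ℝ)) * (ek k j * x ^ j))
      (a := fun k => (c k * ((k + r).choose k : ℝ)) * (x ^ k * (1 / (1 - x) ^ (k + r + 1))))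
      (fun k _ => (hek_sum k).mul_left _)
    have hfun : (fun j : ℕ => ∑ k ∈ Finset.range (p + 1),
        (c k * ((k + r).choose k : ℝ)) * (ek k j * x ^ j)) = fun j : ℕ => E j * x ^ j := by
      funext j
      rw [hE]; simp only
      rw [Finset.sum_mul]
      exact Finset.sum_congr rfl fun k _ => by ring
    have hval : ∑ k ∈ Finset.range (p + 1),
        (c k * ((k + r).choose k : ℝ)) * (x ^ k * (1 / (1 - x) ^ (k + r + 1))) = R2 := by
      rw [hR2]
    rw [hfun, hval] at h
    exact h
  have hrfac : (r.factorial : ℝ) ≠ 0 := Nat.cast_ne_zero.mpr r.factorial_ne_zero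
  have hR2val : A * genGeomPoly p r (x / (1 - x)) = R2 := by
    have h0 : A * genGeomPoly p r (x / (1 - x)) = ∑ k ∈ Finset.range (p + 1),
        (A * (1 / (r.factorial : ℝ))) * ((stirling2 p k : ℝ) * ((k + r).factorial : ℝ)
          * (x / (1 - x)) ^ k) := by
      rw [genGeomPoly, ← mul_assoc, Finset.mul_sum]
    rw [h0, hR2]
    refine Finset.sum_congr rfl fun k _ => ?_
    have hkr : k ≤ k + r := Nat.le_add_right k r
    have hfac : ((k + r).factorial : ℝ)
        = ((k + r).choose k : ℝ) * (k.factorial : ℝ) * (r.factorial : ℝ) := by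
      have h := Nat.choose_mul_factorial_mul_factorial hkr
      rw [Nat.add_sub_cancel_left] at h
      exact_mod_cast h.symm
    rw [hfac, hA, hc]; simp only
    rw [div_pow]
    have hpow : (1 - x) ^ (k + r + 1) = (1 - x) ^ (r + 1) * (1 - x) ^ k := by
      rw [← pow_add]
      congr 1
      omega
    field_simp [hpow]
    ring
  -- power series for the function under the iterated derivative
  set dk : ℕ → ℕ → ℝ := fun k j => if k + r ≤ j then ((j + 1 - r).choose (k + 1) : ℝ) else 0
    with hdk
  set b : ℕ → ℝ := fun j => ∑ k ∈ Finset.range (p + 1), c k * dk k j with hb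
  set Cb : ℝ := ∑ k ∈ Finset.range (p + 1), c k with hCb
  have hchoosebnd : ∀ m k j : ℕ, k ≤ p → m ≤ j + 1 →
      ((m).choose (k + 1) : ℝ) ≤ ((j : ℝ) + 1) ^ (p + 1) := by
    intro m k j hkp hmj
    have h1 : m.choose (k + 1) ≤ (j + 1) ^ (k + 1) := by
      calc m.choose (k + 1) ≤ m.descFactorial (k + 1) := by
            rw [Nat.descFactorial_eq_factorial_mul_choose]
            exact Nat.le_mul_of_pos_left _ (Nat.factorial_pos _)
        _ ≤ m ^ (k + 1) := Nat.descFactorial_le_pow _ _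
        _ ≤ (j + 1) ^ (k + 1) := Nat.pow_le_pow_left hmj _
    calc ((m).choose (k + 1) : ℝ) ≤ (((j + 1) ^ (k + 1) : ℕ) : ℝ) := Nat.cast_le.mpr h1
      _ = ((j : ℝ) + 1) ^ (k + 1) := by push_cast; rfl
      _ ≤ ((j : ℝ) + 1) ^ (p + 1) := by
          refine pow_le_pow_right₀ ?_ (by omega)
          have := Nat.cast_nonneg (α := ℝ) j
          linarith
  have hbbnd : ∀ j : ℕ, |b j| ≤ Cb * ((j : ℝ) + 1) ^ (p + 1) := by
    intro j
    rw [hb]; simp only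
    refine le_trans (Finset.abs_sum_le_sum_abs _ _) ?_
    rw [hCb, Finset.sum_mul]
    refine Finset.sum_le_sum fun k hk => ?_
    rw [abs_mul, abs_of_nonneg (hc0 k)]
    refine mul_le_mul_of_nonneg_left ?_ (hc0 k)
    rw [hdk]; simp only
    split_ifs with h
    · rw [abs_of_nonneg (by positivity)]
      exact hchoosebnd (j + 1 - r) k j (by have := Finset.mem_range.mp hk; omega) (by omega)
    · rw [abs_zero]; positivity
  have hbseries : ∀ y : ℝ, |y| < 1 →
      HasSum (fun j : ℕ => b j * y ^ j) (y ^ r / (1 - y) ^ 2 * geomPoly p (y / (1 - y))) := by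
    intro y hy
    have hy1 : (1 : ℝ) - y ≠ 0 := by
      have h := abs_lt.mp hy
      intro h0
      have : y = 1 := by linarith [sub_eq_zero.mp h0]
      linarith [h.2]
    have hterm : ∀ k : ℕ, HasSum (fun j : ℕ => dk k j * y ^ j)
        (y ^ (k + r) * (1 / (1 - y) ^ (k + 1 + 1))) := by
      intro k
      have h1 := (hasSum_choose_geo (k + 1) hy).mul_left (y ^ (k + r))
      have hinj : Function.Injective (fun i : ℕ => i + (k + r)) := add_left_injective (k + r)
      have hsupp : ∀ j : ℕ, j ∉ Set.range (fun i : ℕ => i + (k + r)) → dk k j * y ^ j = 0 := by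
        intro j hj
        have : j < k + r := by
          by_contra hcon
          exact hj ⟨j - (k + r), by show j - (k + r) + (k + r) = j; omega⟩
        rw [hdk]; simp only
        rw [if_neg (by omega), zero_mul]
      refine (hinj.hasSum_iff hsupp).mp ?_
      show HasSum (fun i : ℕ => dk k (i + (k + r)) * y ^ (i + (k + r))) _
      have hfun : (fun i : ℕ => dk k (i + (k + r)) * y ^ (i + (k + r)))
          = fun i : ℕ => y ^ (k + r) * (((k + 1 + i).choose i : ℝ) * y ^ i) := by
        funext i
        rw [hdk]; simp only
        rw [if_pos (by omega)]
        have hch : (i + (k + r) + 1 - r).choose (k + 1) = (k + 1 + i).choose i := by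
          have he : i + (k + r) + 1 - r = k + 1 + i := by omega
          rw [he]
          exact Nat.choose_symm_add
        rw [hch, pow_add]
        ring
      rw [hfun]
      exact h1
    have hsum := hasSum_sum (s := Finset.range (p + 1))
      (f := fun k j => c k * (dk k j * y ^ j))
      (a := fun k => c k * (y ^ (k + r) * (1 / (1 - y) ^ (k + 1 + 1))))
      (fun k _ => (hterm k).mul_left (c k))
    have hfun2 : (fun j : ℕ => ∑ k ∈ Finset.range (p + 1), c k * (dk k j * y ^ j))
        = fun j : ℕ => b j * y ^ j := by
      funext j
      rw [hb]; simp only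
      rw [Finset.sum_mul]
      exact Finset.sum_congr rfl fun k _ => by ring
    have hval2 : ∑ k ∈ Finset.range (p + 1), c k * (y ^ (k + r) * (1 / (1 - y) ^ (k + 1 + 1)))
        = y ^ r / (1 - y) ^ 2 * geomPoly p (y / (1 - y)) := by
      rw [geomPoly, Finset.mul_sum]
      refine Finset.sum_congr rfl fun k _ => ?_
      rw [hc]; simp only
      rw [div_pow]
      have hpow : (1 - y) ^ (k + 1 + 1) = (1 - y) ^ 2 * (1 - y) ^ k := by
        rw [← pow_add]
        congr 1
        omega
      field_simp [hpow]
      ring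
    rw [hfun2, hval2] at hsum
    exact hsum
  have hball : Metric.ball (0 : ℝ) 1 ∈ nhds x :=
    Metric.isOpen_ball.mem_nhds (mem_ball_zero_iff.mpr (by rwa [Real.norm_eq_abs]))
  have heq : (fun y : ℝ => y ^ r / (1 - y) ^ 2 * geomPoly p (y / (1 - y)))
      =ᶠ[nhds x] fun y : ℝ => ∑' j : ℕ, b j * y ^ j := by
    refine Filter.eventuallyEq_of_mem hball fun y hy => ?_
    have hy1 : |y| < 1 := by simpa [Real.norm_eq_abs] using mem_ball_zero_iff.mp hy
    exact ((hbseries y hy1).tsum_eq).symm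
  have hiter : iteratedDeriv r (fun y : ℝ => y ^ r / (1 - y) ^ 2 * geomPoly p (y / (1 - y))) x
      = ∑' j : ℕ, (((j + r).descFactorial r : ℝ) * b (j + r)) * x ^ j := by
    rw [heq.iteratedDeriv_eq r]
    exact iteratedDeriv_psum r b Cb (p + 1) hbbnd hx
  have hbshift : ∀ j : ℕ, b (j + r)
      = ∑ k ∈ Finset.range (p + 1), c k * ((j + 1).choose (k + 1) : ℝ) := by
    intro j
    rw [hb]; simp only
    refine Finset.sum_congr rfl fun k hk => ?_
    rw [hdk]; simp only
    rcases le_or_gt k j with h | h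
    · rw [if_pos (by omega)]
      have he : j + r + 1 - r = j + 1 := by omega
      rw [he]
    · rw [if_neg (by omega), Nat.choose_eq_zero_of_lt (by omega)]
      simp
  have hR1 : (1 / (r.factorial : ℝ)) * iteratedDeriv r
        (fun y : ℝ => y ^ r / (1 - y) ^ 2 * geomPoly p (y / (1 - y))) x
      = ∑' j : ℕ, ((j + r).choose r : ℝ)
          * (∑ k ∈ Finset.range (p + 1), c k * ((j + 1).choose (k + 1) : ℝ)) * x ^ j := by
    rw [hiter, ← tsum_mul_left]
    refine tsum_congr fun j => ?_
    rw [hbshift j, Nat.descFactorial_eq_factorial_mul_choose]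
    push_cast
    field_simp
  have hR1sum : Summable (fun j : ℕ => ((j + r).choose r : ℝ)
      * (∑ k ∈ Finset.range (p + 1), c k * ((j + 1).choose (k + 1) : ℝ)) * x ^ j) := by
    refine polyBnd (fun j => ((j + r).choose r : ℝ)
      * (∑ k ∈ Finset.range (p + 1), c k * ((j + 1).choose (k + 1) : ℝ)))
      (C := (((r : ℝ) + 1) ^ r) * Cb) (d := p + r + 1) (fun j => ?_) hx
    have h1 : ((j + r).choose r : ℝ) ≤ ((r : ℝ) + 1) ^ r * ((j : ℝ) + 1) ^ r := by
      have he : (j + r).choose r = (r + j).choose j := by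
        rw [← Nat.choose_symm_add]
        congr 1
        omega
      rw [he]
      exact choose_le_bound r j
    have h2 : |∑ k ∈ Finset.range (p + 1), c k * ((j + 1).choose (k + 1) : ℝ)|
        ≤ Cb * ((j : ℝ) + 1) ^ (p + 1) := by
      refine le_trans (Finset.abs_sum_le_sum_abs _ _) ?_
      rw [hCb, Finset.sum_mul]
      refine Finset.sum_le_sum fun k hk => ?_
      rw [abs_mul, abs_of_nonneg (hc0 k)]
      refine mul_le_mul_of_nonneg_left ?_ (hc0 k)
      rw [abs_of_nonneg (by positivity)]
      exact hchoosebnd (j + 1) k j (by have := Finset.mem_range.mp hk; omega) le_rfl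
    rw [abs_mul, abs_of_nonneg (by positivity : (0:ℝ) ≤ ((j + r).choose r : ℝ))]
    refine le_trans (mul_le_mul h1 h2 (abs_nonneg _) (by positivity)) ?_
    refine le_of_eq ?_
    rw [show p + r + 1 = (p + 1) + r by omega, pow_add]
    ring
  have hfinal : ∀ j : ℕ, (∑ k ∈ Finset.range (p + 1), c k * (j.choose (k + 1) : ℝ)) * a j
      = ((j + r).choose r : ℝ)
          * (∑ k ∈ Finset.range (p + 1), c k * ((j + 1).choose (k + 1) : ℝ)) * x ^ j
        - E j * x ^ j := by
    intro j
    have key : (∑ k ∈ Finset.range (p + 1), c k * (j.choose (k + 1) : ℝ)) * ((r + j).choose j : ℝ)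
        + (∑ k ∈ Finset.range (p + 1), c k * ((k + r).choose k : ℝ) * ek k j)
        = ((j + r).choose r : ℝ)
            * (∑ k ∈ Finset.range (p + 1), c k * ((j + 1).choose (k + 1) : ℝ)) := by
      rw [Finset.sum_mul, Finset.mul_sum, ← Finset.sum_add_distrib]
      refine Finset.sum_congr rfl fun k _ => ?_
      have hDk := chooseD r k j
      rw [hek]; simp only
      linear_combination (c k) * hDk
    rw [ha, hE]; simp only
    linear_combination x ^ j * key
  rw [show (∑' j : ℕ, (∑ k ∈ Finset.range (p + 1), c k * (j.choose (k + 1) : ℝ)) * a j)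
      = ∑' j : ℕ, (((j + r).choose r : ℝ)
          * (∑ k ∈ Finset.range (p + 1), c k * ((j + 1).choose (k + 1) : ℝ)) * x ^ j
        - E j * x ^ j) from tsum_congr hfinal]
  rw [Summable.tsum_sub hR1sum hEsum.summable, ← hR1, hEsum.tsum_eq, ← hR2val]
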